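/- For every h ≥ 1 let S_h be the complete balanced binary trie of height h over the alphabet {a, b}, i.e., the set of all strings over {a, b} of length at most h, with n = 2^{h+1} − 1 nodes, and let r be its number of XBWT runs. Then (1/4)·n·H_0(S_h) ≤ r ≤ n·H_0(S_h); in particular r = Θ(n·H_0(S_h)) = Θ(n) over this infinite family of tries. -/

import Mathlib

/-- The co-lexicographic order on strings: compare the reversed strings in the
(lexicographic) order on lists, the empty string being smallest. -/
def colexLe (σ : ℕ) (s t : List (Fin σ)) : Prop := s.reverse ≤ t.reverse

instance (σ : ℕ) : DecidableRel (colexLe σ) :=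
  fun s t => inferInstanceAs (Decidable (s.reverse ≤ t.reverse))

instance (σ : ℕ) : IsTrans (List (Fin σ)) (colexLe σ) :=
  ⟨fun _ _ _ h1 h2 => le_trans h1 h2⟩

instance (σ : ℕ) : IsAntisymm (List (Fin σ)) (colexLe σ) :=
  ⟨fun _ _ h1 h2 => List.reverse_injective (le_antisymm h1 h2)⟩

instance (σ : ℕ) : IsTotal (List (Fin σ)) (colexLe σ) :=
  ⟨fun a b => le_total a.reverse b.reverse⟩

/-- The number `r` of XBWT runs of a trie `S`: with `u_1, …, u_n` the nodes of
`S` in co-lexicographic order (0-indexed below), `r = ∑_{c} r_c` where `r_c`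
counts the indices `i` such that `u_i·c ∈ S` and either `i = n` or
`u_{i+1}·c ∉ S`. -/
def xbwtRuns (σ : ℕ) (S : Finset (List (Fin σ))) : ℕ :=
  ∑ c : Fin σ,
    ((Finset.range (S.sort (colexLe σ)).length).filter fun i =>
      (S.sort (colexLe σ)).getD i [] ++ [c] ∈ S ∧
      (i = (S.sort (colexLe σ)).length - 1 ∨
        (S.sort (colexLe σ)).getD (i + 1) [] ++ [c] ∉ S)).card

/-- The 0-th order empirical entropy of a trie `S` with `n` nodes:
`H₀ = ∑ᵢ (nᵢ/n)·log₂(n/nᵢ) + ((n−nᵢ)/n)·log₂(n/(n−nᵢ))`. -/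
noncomputable def trieH0 (σ : ℕ) (S : Finset (List (Fin σ))) : ℝ :=
  ∑ i : Fin σ,
    (((S.filter fun s => s.getLast? = some i).card : ℝ) / (S.card : ℝ) *
        Real.logb 2 ((S.card : ℝ) / ((S.filter fun s => s.getLast? = some i).card : ℝ)) +
      ((S.card : ℝ) - ((S.filter fun s => s.getLast? = some i).card : ℝ)) / (S.card : ℝ) *
        Real.logb 2 ((S.card : ℝ) /
          ((S.card : ℝ) - ((S.filter fun s => s.getLast? = some i).card : ℝ))))


/-! ### Auxiliary machinery -/

/-- The colex-sorted list of all binary strings of length at most `k`. -/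
def L2 : ℕ → List (List (Fin 2))
  | 0 => [[]]
  | k+1 => [] :: ((L2 k).map (· ++ [0]) ++ (L2 k).map (· ++ [1]))

/-- Number of runs of `true`s in a boolean list. -/
def runf : List Bool → ℕ
  | [] => 0
  | [a] => cond a 1 0
  | a :: b :: t => (cond (a && !b) 1 0) + runf (b :: t)

lemma runf_cons_cons (a b : Bool) (t : List Bool) :
    runf (a :: b :: t) = (cond (a && !b) 1 0) + runf (b :: t) := rfl

lemma cons_le_cons_iff (a : Fin 2) (x y : List (Fin 2)) : a :: x ≤ a :: y ↔ x ≤ y := by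
  constructor
  · intro hle
    by_contra hx
    exact absurd hle (not_le.mpr (List.Lex.cons (lt_of_not_ge hx)))
  · exact List.cons_le_cons a

lemma colex_append_iff (c : Fin 2) (s t : List (Fin 2)) :
    colexLe 2 (s ++ [c]) (t ++ [c]) ↔ colexLe 2 s t := by
  unfold colexLe
  rw [List.reverse_append, List.reverse_append]
  simpa using cons_le_cons_iff c s.reverse t.reverse

lemma colex_zero_one (s t : List (Fin 2)) : colexLe 2 (s ++ [0]) (t ++ [1]) := by
  unfold colexLe
  rw [List.reverse_append, List.reverse_append]
  exact le_of_lt (List.Lex.rel (by decide))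

lemma colex_nil (s : List (Fin 2)) : colexLe 2 [] s := by
  unfold colexLe
  simp only [List.reverse_nil]
  rcases s.reverse with _ | ⟨a, l⟩
  · exact le_rfl
  · exact le_of_lt List.Lex.nil

lemma fin2_cases : ∀ c : Fin 2, c = 0 ∨ c = 1 := by decide

lemma mem_L2 (k : ℕ) (s : List (Fin 2)) : s ∈ L2 k ↔ s.length ≤ k := by
  induction k generalizing s with
  | zero => simp [L2, List.length_eq_zero_iff]
  | succ k ih =>
    simp only [L2, List.mem_cons, List.mem_append, List.mem_map]
    constructor
    · rintro (rfl | ⟨t, ht, rfl⟩ | ⟨t, ht, rfl⟩) <;>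
        simp_all <;> omega
    · intro hs
      rcases eq_or_ne s [] with rfl | hne
      · left; rfl
      right
      have hdrop : s.dropLast ++ [s.getLast hne] = s := List.dropLast_append_getLast hne
      have hlen : s.dropLast.length ≤ k := by
        have := List.length_pos_iff.mpr hne
        simp only [List.length_dropLast]; omega
      rcases fin2_cases (s.getLast hne) with h0 | h0
      · left; exact ⟨s.dropLast, ih _ |>.mpr hlen, by rw [← h0, hdrop]⟩
      · right; exact ⟨s.dropLast, ih _ |>.mpr hlen, by rw [← h0, hdrop]⟩

lemma nodup_L2 (k : ℕ) : (L2 k).Nodup := by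
  induction k with
  | zero => simp [L2]
  | succ k ih =>
    simp only [L2]
    rw [List.nodup_cons]
    constructor
    · intro hmem
      rcases List.mem_append.mp hmem with hmm | hmm <;>
        · obtain ⟨t, _, ht⟩ := List.mem_map.mp hmm
          exact absurd ht.symm (by simp)
    · rw [List.nodup_append]
      refine ⟨?_, ?_, ?_⟩
      · exact ih.map (List.append_left_injective _)
      · exact ih.map (List.append_left_injective _)
      · intro s hs s' hs' hu
        obtain ⟨t, _, rfl⟩ := List.mem_map.mp hs
        obtain ⟨u, _, rfl⟩ := List.mem_map.mp hs'
        have h2 := congrArg List.getLast? hu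
        rw [List.getLast?_concat, List.getLast?_concat] at h2
        exact absurd (Option.some.inj h2) (by decide)

lemma sorted_L2 (k : ℕ) : (L2 k).Pairwise (colexLe 2) := by
  induction k with
  | zero => simp [L2]
  | succ k ih =>
    simp only [L2]
    rw [List.pairwise_cons]
    constructor
    · intro s _; exact colex_nil s
    · rw [List.pairwise_append]
      refine ⟨?_, ?_, ?_⟩
      · rw [List.pairwise_map]
        exact ih.imp fun h => (colex_append_iff 0 _ _).mpr h
      · rw [List.pairwise_map]
        exact ih.imp fun h => (colex_append_iff 1 _ _).mpr h
      · intro s hs t ht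
        obtain ⟨u, _, rfl⟩ := List.mem_map.mp hs
        obtain ⟨v, _, rfl⟩ := List.mem_map.mp ht
        exact colex_zero_one u v

lemma length_L2 (k : ℕ) : (L2 k).length = 2 ^ (k + 1) - 1 := by
  induction k with
  | zero => simp [L2]
  | succ k ih =>
    simp only [L2, List.length_cons, List.length_append, List.length_map, ih]
    have : 1 ≤ 2 ^ (k + 1) := Nat.one_le_two_pow
    ring_nf
    omega

lemma sort_eq (h : ℕ) (S : Finset (List (Fin 2)))
    (hS : ∀ l : List (Fin 2), l ∈ S ↔ l.length ≤ h) :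
    S.sort (colexLe 2) = L2 h :=
  List.Perm.eq_of_pairwise' (S.pairwise_sort _) (sorted_L2 h)
    (List.perm_of_nodup_nodup_toFinset_eq (S.sort_nodup _) (nodup_L2 h)
      (by ext s; simp [Finset.mem_sort, mem_L2, hS]))

lemma card_eq_of_mem_iff (k : ℕ) (T : Finset (List (Fin 2)))
    (hT : ∀ l : List (Fin 2), l ∈ T ↔ l.length ≤ k) :
    T.card = 2 ^ (k + 1) - 1 := by
  have hTeq : T = (L2 k).toFinset := by
    ext s; simp [hT, mem_L2]
  rw [hTeq, List.toFinset_card_of_nodup (nodup_L2 k), length_L2]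

/-- Counting run-ends via `runf`. -/
lemma filter_card_eq_runf {α : Type*} (p : α → Prop) [DecidablePred p] (d : α) :
    ∀ l : List α,
    ((Finset.range l.length).filter fun i =>
        p (l.getD i d) ∧ (i = l.length - 1 ∨ ¬ p (l.getD (i+1) d))).card
      = runf (l.map fun a => decide (p a))
  | [] => by simp [runf]
  | [a] => by
      have h0 : (([a] : List α).getD 0 d) = a := rfl
      rw [Finset.card_filter, show ([a] : List α).length = 1 from rfl,
        Finset.sum_range_one, h0]
      by_cases hp : p a <;> simp [runf, hp]
  | a :: b :: t => by
      rw [Finset.card_filter, show (a :: b :: t).length = (b :: t).length + 1 from rfl,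
        Finset.sum_range_succ']
      have h1 : ∀ i, ((a :: b :: t).getD (i + 1) d) = (b :: t).getD i d := fun i => rfl
      have h2 : ∀ i, ((a :: b :: t).getD (i + 1 + 1) d) = (b :: t).getD (i + 1) d := fun i => rfl
      have hshift : (∑ i ∈ Finset.range (b :: t).length,
          if p ((a :: b :: t).getD (i + 1) d) ∧
              (i + 1 = (b :: t).length + 1 - 1 ∨ ¬p ((a :: b :: t).getD (i + 1 + 1) d))
            then 1 else 0)
          = ((Finset.range (b :: t).length).filter fun i =>
              p ((b :: t).getD i d) ∧
                ((i = (b :: t).length - 1) ∨ ¬ p ((b :: t).getD (i+1) d))).card := by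
        rw [Finset.card_filter]
        refine Finset.sum_congr rfl fun i _ => if_congr ?_ rfl rfl
        rw [h1, h2 i]
        have hiff : (i + 1 = (b :: t).length + 1 - 1) ↔ (i = (b :: t).length - 1) := by
          simp only [List.length_cons]; omega
        exact and_congr_right fun _ => or_congr hiff Iff.rfl
      rw [hshift, filter_card_eq_runf p d (b :: t)]
      have g0 : (if p ((a :: b :: t).getD 0 d) ∧
            ((0:ℕ) = (b :: t).length + 1 - 1 ∨ ¬ p ((a :: b :: t).getD (0+1) d))
          then 1 else 0) = (cond (decide (p a) && !(decide (p b))) 1 0) := by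
        have hz : ((a :: b :: t).getD 0 d) = a := rfl
        have ho : ((a :: b :: t).getD (0+1) d) = b := rfl
        have hne : ¬ ((0:ℕ) = (b :: t).length + 1 - 1) := by
          simp only [List.length_cons]; omega
        rw [hz, ho]
        by_cases hpa : p a <;> by_cases hpb : p b <;> simp [hpa, hpb, hne]
      rw [g0]
      simp only [List.map_cons]
      rw [runf_cons_cons]
      exact Nat.add_comm _ _

/-- The boolean run-structure of the complete binary trie. -/
def Wb : ℕ → List Bool
  | 0 => [false]
  | k+1 => true :: (Wb k ++ Wb k)

lemma map_L2_eq_Wb (k : ℕ) : ((L2 k).map fun s => decide (s.length < k)) = Wb k := by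
  induction k with
  | zero => simp [L2, Wb]
  | succ k ih =>
    simp only [L2, Wb, List.map_cons, List.map_append, List.map_map]
    have hc : ∀ c : Fin 2, ((fun s : List (Fin 2) => decide (s.length < k + 1)) ∘ (· ++ [c]))
        = fun s : List (Fin 2) => decide (s.length < k) := by
      intro c; funext s
      show decide ((s ++ [c]).length < k + 1) = decide (s.length < k)
      rw [decide_eq_decide]
      simp only [List.length_append, List.length_cons, List.length_nil]
      omega
    rw [hc 0, hc 1, ih]
    simp

lemma Wb_ne_nil (k : ℕ) : Wb k ≠ [] := by
  cases k <;> simp [Wb]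

lemma getLast?_Wb (k : ℕ) : (Wb k).getLast? = some false := by
  induction k with
  | zero => rfl
  | succ k ih =>
    show (true :: (Wb k ++ Wb k)).getLast? = some false
    rw [show true :: (Wb k ++ Wb k) = (true :: Wb k) ++ Wb k from rfl]
    rw [List.getLast?_append_of_ne_nil _ (Wb_ne_nil k)]
    exact ih

lemma runf_append (x y : List Bool) (hy : y ≠ []) (hx : x.getLast? = some false) :
    runf (x ++ y) = runf x + runf y := by
  induction x with
  | nil => simp at hx
  | cons a x ih =>
    cases x with
    | nil =>
      simp only [List.getLast?_singleton, Option.some.injEq] at hx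
      subst hx
      cases y with
      | nil => exact absurd rfl hy
      | cons b t => simp [runf]
    | cons b x' =>
      have hx' : (b :: x').getLast? = some false := by
        rwa [List.getLast?_cons_cons] at hx
      rw [show (a :: b :: x') ++ y = a :: b :: (x' ++ y) from rfl, runf_cons_cons,
        show (b :: (x' ++ y)) = (b :: x') ++ y from rfl, ih hx', runf_cons_cons]
      omega

lemma head_Wb (k : ℕ) (hk : 1 ≤ k) : ∃ t, Wb k = true :: t := by
  cases k with
  | zero => omega
  | succ k => exact ⟨Wb k ++ Wb k, rfl⟩

lemma runf_Wb (k : ℕ) (hk : 1 ≤ k) : runf (Wb k) = 2 ^ (k - 1) := by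
  induction k with
  | zero => omega
  | succ k ih =>
    rcases Nat.eq_zero_or_pos k with h0 | hk1
    · subst h0; rfl
    obtain ⟨t, ht⟩ := head_Wb k hk1
    have hsplit : runf (Wb k ++ Wb k) = runf (Wb k) + runf (Wb k) :=
      runf_append _ _ (Wb_ne_nil k) (getLast?_Wb k)
    have hstep : runf (Wb (k+1)) = runf (Wb k ++ Wb k) := by
      show runf (true :: (Wb k ++ Wb k)) = runf (Wb k ++ Wb k)
      rw [ht, show (true :: t) ++ (true :: t) = true :: (t ++ true :: t) from rfl,
        runf_cons_cons]
      simp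
    rw [hstep, hsplit, ih hk1, ← two_mul, ← pow_succ']
    congr 1
    omega

lemma xbwtRuns_eq (h : ℕ) (hh : 1 ≤ h) (S : Finset (List (Fin 2)))
    (hS : ∀ l : List (Fin 2), l ∈ S ↔ l.length ≤ h) :
    xbwtRuns 2 S = 2 ^ h := by
  unfold xbwtRuns
  rw [sort_eq h S hS]
  have key : ∀ c : Fin 2,
      ((Finset.range (L2 h).length).filter fun i =>
        (L2 h).getD i [] ++ [c] ∈ S ∧
        (i = (L2 h).length - 1 ∨ (L2 h).getD (i + 1) [] ++ [c] ∉ S)).card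
      = 2 ^ (h - 1) := by
    intro c
    rw [filter_card_eq_runf (fun s => s ++ [c] ∈ S) [] (L2 h)]
    have hmapeq : ((L2 h).map fun a => decide (a ++ [c] ∈ S))
        = ((L2 h).map fun s => decide (s.length < h)) := by
      refine List.map_congr_left fun s _ => ?_
      rw [decide_eq_decide, hS]
      simp only [List.length_append, List.length_cons, List.length_nil]
      omega
    rw [hmapeq, map_L2_eq_Wb, runf_Wb h hh]
  rw [Fin.sum_univ_two, key 0, key 1, ← two_mul, ← pow_succ']
  congr 1
  omega

/-- For the complete balanced binary trie `S_h` of height `h ≥ 1` (with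
`n = 2^{h+1} − 1` nodes) and its number `r` of XBWT runs:
`(1/4)·n·H₀(S_h) ≤ r ≤ n·H₀(S_h)`; in particular `r = Θ(n·H₀) = Θ(n)` on
this infinite family of tries. -/
theorem stmt13 (h : ℕ) (hh : 1 ≤ h) (S : Finset (List (Fin 2)))
    (hS : ∀ l : List (Fin 2), l ∈ S ↔ l.length ≤ h) :
    (1 / 4 : ℝ) * (S.card : ℝ) * trieH0 2 S ≤ (xbwtRuns 2 S : ℝ) ∧
    (xbwtRuns 2 S : ℝ) ≤ (S.card : ℝ) * trieH0 2 S := by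
  have hcard : S.card = 2 ^ (h + 1) - 1 := card_eq_of_mem_iff h S hS
  have hfilt : ∀ i : Fin 2, (S.filter fun s => s.getLast? = some i).card = 2 ^ h - 1 := by
    intro i
    set T : Finset (List (Fin 2)) := S.filter fun s => s.length ≤ h - 1 with hT
    have hTmem : ∀ l : List (Fin 2), l ∈ T ↔ l.length ≤ h - 1 := by
      intro l; simp only [hT, Finset.mem_filter, hS]; omega
    have himg : (S.filter fun s => s.getLast? = some i) = T.image (· ++ [i]) := by
      ext s
      simp only [Finset.mem_filter, Finset.mem_image, hS]
      constructor
      · rintro ⟨hlen, hlast⟩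
        have hne : s ≠ [] := by rintro rfl; simp at hlast
        refine ⟨s.dropLast, ?_, ?_⟩
        · rw [hTmem]
          have := List.length_pos_iff.mpr hne
          simp only [List.length_dropLast]; omega
        · exact List.dropLast_append_getLast? i (by rwa [Option.mem_def])
      · rintro ⟨t, ht, rfl⟩
        rw [hTmem] at ht
        constructor
        · simp only [List.length_append, List.length_cons, List.length_nil]; omega
        · exact List.getLast?_concat
    rw [himg, Finset.card_image_of_injective _ (List.append_left_injective _),
      card_eq_of_mem_iff (h - 1) T hTmem,
      show h - 1 + 1 = h from by omega]
  have hrun : xbwtRuns 2 S = 2 ^ h := xbwtRuns_eq h hh S hS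
  set M : ℝ := (2 : ℝ) ^ h with hM
  have hM2 : (2 : ℝ) ≤ M := by
    calc (2:ℝ) = 2 ^ 1 := by norm_num
    _ ≤ 2 ^ h := pow_le_pow_right₀ (by norm_num) hh
  set N : ℝ := 2 * M - 1 with hN
  have hN0 : (0 : ℝ) < N := by rw [hN]; linarith
  have hM10 : (0 : ℝ) < M - 1 := by linarith
  have hone : (1:ℕ) ≤ 2 ^ (h+1) := Nat.one_le_two_pow
  have hone' : (1:ℕ) ≤ 2 ^ h := Nat.one_le_two_pow
  have hcardR : (S.card : ℝ) = N := by
    rw [hcard, hN, hM, Nat.cast_sub hone]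
    push_cast
    ring
  have hfiltR : ∀ i : Fin 2, ((S.filter fun s => s.getLast? = some i).card : ℝ) = M - 1 := by
    intro i
    rw [hfilt i, hM, Nat.cast_sub hone']
    push_cast
    ring
  have hrunR : (xbwtRuns 2 S : ℝ) = M := by rw [hrun, hM]; push_cast; ring
  have hNM : N - (M - 1) = M := by rw [hN]; ring
  have hH : trieH0 2 S
      = 2 * ((M - 1) / N * Real.logb 2 (N / (M - 1)) + M / N * Real.logb 2 (N / M)) := by
    unfold trieH0
    rw [Fin.sum_univ_two, hfiltR 0, hfiltR 1, hcardR, hNM]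
    ring
  set A : ℝ := Real.logb 2 (N / (M - 1)) with hA
  set B : ℝ := Real.logb 2 (N / M) with hB
  have hterm : (M - 1) / N * A + M / N * B ≤ 1 := by
    have hpinv : N / (M - 1) = ((M - 1) / N)⁻¹ := by
      rw [inv_div]
    have h1p : 1 - (M - 1) / N = M / N := by
      rw [eq_div_iff (ne_of_gt hN0), sub_mul, div_mul_cancel₀ _ (ne_of_gt hN0)]
      linarith
    have hMNinv : N / M = (M / N)⁻¹ := by rw [inv_div]
    have hbe := Real.binEntropy_le_log_two (p := (M - 1) / N)
    rw [Real.binEntropy] at hbe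
    have hl2 : (0:ℝ) < Real.log 2 := Real.log_pos (by norm_num)
    have hrepr : (M - 1) / N * A + M / N * B
        = ((M - 1) / N * Real.log (((M - 1) / N)⁻¹)
            + (1 - (M - 1) / N) * Real.log ((1 - (M - 1) / N)⁻¹)) / Real.log 2 := by
      rw [hA, hB, hpinv, h1p, hMNinv]
      simp only [Real.logb]
      ring
    rw [hrepr, div_le_one hl2]
    exact hbe
  have hA1 : 1 ≤ A := by
    have hle : (2:ℝ) ≤ N / (M - 1) := by
      rw [le_div_iff₀ hM10]; rw [hN]; linarith
    have h2 := Real.logb_le_logb_of_le (by norm_num : (1:ℝ) < 2)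
      (by norm_num : (0:ℝ) < 2) hle
    rwa [Real.logb_self_eq_one (by norm_num)] at h2
  have hB0 : 0 ≤ B := by
    rw [hB]
    apply Real.logb_nonneg (by norm_num : (1:ℝ) < 2)
    rw [le_div_iff₀ (by linarith : (0:ℝ) < M), hN]
    linarith
  rw [hrunR, hcardR, hH]
  constructor
  · nlinarith [mul_le_mul_of_nonneg_left hterm (le_of_lt hN0)]
  · have e1 : N * (2 * ((M - 1) / N * A + M / N * B)) = 2 * ((M - 1) * A + M * B) := by
      field_simp
    rw [e1]
    nlinarith [mul_le_mul_of_nonneg_left hA1 (le_of_lt hM10),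
      mul_nonneg (by linarith : (0:ℝ) ≤ M) hB0]
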